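/- Let N ≥ 2 and let a_1, …, a_N be vectors in a complex inner product space E with norm ‖·‖ induced by the inner product. Then (1/(2N − 2)) · [ (2/(N(N − 1))) · (∑_{1 ≤ i < j ≤ N} ‖a_i − a_j‖)² + ∑_{1 ≤ i < j ≤ N} ‖a_i + a_j‖² ] ≥ (1/N) · ‖∑_{i=1}^N a_i‖² + (2/(N²(N − 1))) · (∑_{1 ≤ i < j ≤ N} ‖a_i − a_j‖)². (Hence the lower bound of Theorem 1 is always at least as large as the lower bound of Ren et al.) -/

import Mathlib

open Finset

private lemma pair_sum_key {N : ℕ} (F : Fin N → Fin N → ℝ) :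
    ∑ p ∈ univ.filter (fun p : Fin N × Fin N => p.1 < p.2), (F p.1 p.2 + F p.2 p.1)
      = ∑ p ∈ univ.filter (fun p : Fin N × Fin N => p.1 ≠ p.2), F p.1 p.2 := by
  have hsplit : univ.filter (fun p : Fin N × Fin N => p.1 ≠ p.2)
      = univ.filter (fun p : Fin N × Fin N => p.1 < p.2)
        ∪ univ.filter (fun p : Fin N × Fin N => p.2 < p.1) := by
    ext p
    simp only [mem_union, mem_filter, mem_univ, true_and]
    constructor
    · intro h; exact lt_or_gt_of_ne h
    · rintro (h | h); exacts [ne_of_lt h, (ne_of_lt h).symm]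
  have hdisj : Disjoint (univ.filter (fun p : Fin N × Fin N => p.1 < p.2))
      (univ.filter (fun p : Fin N × Fin N => p.2 < p.1)) := by
    simp only [Finset.disjoint_left, mem_filter, mem_univ, true_and]
    intro p h1 h2; exact absurd h1 (asymm h2)
  rw [hsplit, sum_union hdisj, sum_add_distrib]
  congr 1
  exact sum_nbij' (fun p => p.swap) (fun p => p.swap)
    (by simp) (by simp) (by simp) (by simp) (by simp)

private lemma all_sum_key {N : ℕ} (F : Fin N → Fin N → ℝ) :
    ∑ i, ∑ j, F i j
      = (∑ i, F i i) + ∑ p ∈ univ.filter (fun p : Fin N × Fin N => p.1 ≠ p.2), F p.1 p.2 := by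
  have h0 : ∑ p ∈ (univ : Finset (Fin N × Fin N)), F p.1 p.2 = ∑ i, ∑ j, F i j := by
    rw [← Finset.univ_product_univ, Finset.sum_product]
  rw [← h0, ← Finset.sum_filter_add_sum_filter_not univ (fun p : Fin N × Fin N => p.1 = p.2)]
  congr 1
  exact sum_nbij' (fun p => p.1) (fun i => (i, i))
    (by simp) (by simp) (by simp +contextual [Prod.ext_iff]) (by simp)
    (by simp +contextual [Prod.ext_iff])

open Finset in
theorem bound_comparison {E : Type*} [NormedAddCommGroup E] [InnerProductSpace ℂ E]
    (N : ℕ) (hN : 2 ≤ N) (a : Fin N → E) :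
    (1 / (2 * (N : ℝ) - 2)) *
        ((2 / ((N : ℝ) * ((N : ℝ) - 1))) *
            (∑ p ∈ univ.filter (fun p : Fin N × Fin N => p.1 < p.2), ‖a p.1 - a p.2‖) ^ 2 +
          ∑ p ∈ univ.filter (fun p : Fin N × Fin N => p.1 < p.2), ‖a p.1 + a p.2‖ ^ 2) ≥
      (1 / (N : ℝ)) * ‖∑ i, a i‖ ^ 2 +
        (2 / ((N : ℝ) ^ 2 * ((N : ℝ) - 1))) *
          (∑ p ∈ univ.filter (fun p : Fin N × Fin N => p.1 < p.2), ‖a p.1 - a p.2‖) ^ 2 := by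
  have hn : (2:ℝ) ≤ (N:ℝ) := by exact_mod_cast hN
  set n : ℝ := (N : ℝ) with hn'
  have hn0 : (0:ℝ) < n := by linarith
  have hn1 : (0:ℝ) < n - 1 := by linarith
  set s : Finset (Fin N × Fin N) := univ.filter (fun p : Fin N × Fin N => p.1 < p.2) with hs
  set t : Finset (Fin N × Fin N) := univ.filter (fun p : Fin N × Fin N => p.1 ≠ p.2) with ht
  set r : Fin N → Fin N → ℝ := fun i j => RCLike.re (inner ℂ (a i) (a j) : ℂ) with hr
  set U : ℝ := ∑ i, ‖a i‖ ^ 2 with hU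
  set P : ℝ := ∑ p ∈ t, r p.1 p.2 with hP
  set S : ℝ := ∑ p ∈ s, ‖a p.1 - a p.2‖ with hS
  set Q : ℝ := ∑ p ∈ s, ‖a p.1 - a p.2‖ ^ 2 with hQ
  set T : ℝ := ∑ p ∈ s, ‖a p.1 + a p.2‖ ^ 2 with hT
  -- W = ∑ p ∈ t, ‖a p.1‖² = (n-1) U
  have hW : ∑ p ∈ t, ‖a p.1‖ ^ 2 = (n - 1) * U := by
    have := all_sum_key (fun i _ => ‖a i‖ ^ 2)
    simp only [Finset.sum_const, card_univ, Fintype.card_fin, nsmul_eq_mul] at this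
    have h2 : ∑ i : Fin N, (N : ℝ) * ‖a i‖ ^ 2 = n * U := by
      rw [← Finset.mul_sum]
    rw [h2] at this
    linarith [this]
  -- M = U + P
  have hM : ‖∑ i, a i‖ ^ 2 = U + P := by
    have h1 : ‖∑ i, a i‖ ^ 2 = ∑ i, ∑ j, r i j := by
      rw [← @inner_self_eq_norm_sq ℂ]
      rw [sum_inner]
      rw [map_sum]
      refine Finset.sum_congr rfl fun i _ => ?_
      rw [inner_sum, map_sum]
    rw [h1, all_sum_key r]
    congr 1
    refine Finset.sum_congr rfl fun i _ => ?_
    exact @inner_self_eq_norm_sq ℂ _ _ _ _ (a i)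
  -- Q = (n-1) U - P
  have hQeq : Q = (n - 1) * U - P := by
    have h1 : Q = ∑ p ∈ s, ((fun i j => ‖a i‖ ^ 2 - r i j) p.1 p.2
        + (fun i j => ‖a i‖ ^ 2 - r i j) p.2 p.1) := by
      refine Finset.sum_congr rfl fun p _ => ?_
      have := @norm_sub_sq ℂ _ _ _ _ (a p.1) (a p.2)
      have hsymm : r p.2 p.1 = r p.1 p.2 := inner_re_symm _ _
      simp only [hr] at *
      rw [this]; rw [hsymm]; ring
    rw [h1, hs, pair_sum_key (fun i j => ‖a i‖ ^ 2 - r i j), ← ht]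
    simp only [Finset.sum_sub_distrib, hW, hP]
  -- T = (n-1) U + P
  have hTeq : T = (n - 1) * U + P := by
    have h1 : T = ∑ p ∈ s, ((fun i j => ‖a i‖ ^ 2 + r i j) p.1 p.2
        + (fun i j => ‖a i‖ ^ 2 + r i j) p.2 p.1) := by
      refine Finset.sum_congr rfl fun p _ => ?_
      have := @norm_add_sq ℂ _ _ _ _ (a p.1) (a p.2)
      have hsymm : r p.2 p.1 = r p.1 p.2 := inner_re_symm _ _
      simp only [hr] at *
      rw [this]; rw [hsymm]; ring
    rw [h1, hs, pair_sum_key (fun i j => ‖a i‖ ^ 2 + r i j), ← ht]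
    simp only [Finset.sum_add_distrib, hW, hP]
  -- card s
  have hcard : (s.card : ℝ) = n * (n - 1) / 2 := by
    have h1 := pair_sum_key (N := N) (fun _ _ => (1:ℝ))
    have h2 := all_sum_key (N := N) (fun _ _ => (1:ℝ))
    simp only [Finset.sum_const, card_univ, Fintype.card_fin, nsmul_eq_mul, mul_one] at h1 h2
    linear_combination h1 / 2 - h2 / 2
  -- Cauchy-Schwarz
  have hCS : S ^ 2 ≤ n * (n - 1) / 2 * Q := by
    have := sq_sum_le_card_mul_sum_sq (s := s) (f := fun p => ‖a p.1 - a p.2‖)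
    calc S ^ 2 ≤ (s.card : ℝ) * Q := by exact_mod_cast this
      _ = n * (n - 1) / 2 * Q := by rw [hcard]
  have hQ0 : (0:ℝ) ≤ Q := Finset.sum_nonneg fun p _ => sq_nonneg _
  -- final algebra
  rw [ge_iff_le, ← sub_nonneg]
  have expand : (1 / (2 * n - 2)) * ((2 / (n * (n - 1))) * S ^ 2 + T)
      - ((1 / n) * ‖∑ i, a i‖ ^ 2 + (2 / (n ^ 2 * (n - 1))) * S ^ 2)
      = ((n - 2) * (n * (n - 1) / 2 * Q - S ^ 2)) / (n ^ 2 * (n - 1) ^ 2) := by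
    rw [hM, hTeq, hQeq]
    have h1 : 2 * n - 2 ≠ 0 := by linarith
    have h2 : n ≠ 0 := ne_of_gt hn0
    have h3 : n - 1 ≠ 0 := ne_of_gt hn1
    field_simp
    ring
  rw [expand]
  apply div_nonneg
  · have : (0:ℝ) ≤ n - 2 := by linarith
    nlinarith
  · positivity
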